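/- Let λ₁, λ₂ be nonzero rational numbers with λ₁ + λ₂ ≠ 0, and let N₁, N₂, η₁, η₂ be elements of a commutative ℚ-algebra satisfying N₁λ₁ = N₂λ₂ and η₁λ₁ = η₂λ₂ (scalar multiplication by rationals). Set N = N₁ + N₂, η = η₁ + η₂, and λ = λ₁λ₂/(λ₁+λ₂). Then (1/2)λ²·N·η·(η - N·c₁) = (1/2)λ₁²·N₁·η₁·(η₁ - N₁·c₁) + (1/2)λ₂²·N₂·η₂·(η₂ - N₂·c₁) for any element c₁ of the algebra. -/
import Mathlib


/-!
STATEMENT 1: For a reducible spectral cover `S = S₁ ∪ S₂` with matching conditions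
`N₁λ₁ = N₂λ₂` and `η₁λ₁ = η₂λ₂`, the choice `λ = λ₁λ₂/(λ₁+λ₂)` makes the
topological formula for `ω` agree with the smooth spectral cover formula.
All quantities live in a commutative ℚ-algebra; `λ₁, λ₂` are rational scalars,
`N₁, N₂, η₁, η₂, c₁` are algebra elements.
-/

theorem reducible_cover_lambda_identity {R : Type*} [CommRing R] [Algebra ℚ R]
    (lam₁ lam₂ : ℚ) (hlam₁ : lam₁ ≠ 0) (hlam₂ : lam₂ ≠ 0)
    (hsum : lam₁ + lam₂ ≠ 0)
    (N₁ N₂ η₁ η₂ c₁ : R)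
    (hN : lam₁ • N₁ = lam₂ • N₂)
    (hη : lam₁ • η₁ = lam₂ • η₂) :
    ((1 / 2 : ℚ) * (lam₁ * lam₂ / (lam₁ + lam₂)) ^ 2) •
        ((N₁ + N₂) * (η₁ + η₂) * ((η₁ + η₂) - (N₁ + N₂) * c₁)) =
      ((1 / 2 : ℚ) * lam₁ ^ 2) • (N₁ * η₁ * (η₁ - N₁ * c₁)) +
        ((1 / 2 : ℚ) * lam₂ ^ 2) • (N₂ * η₂ * (η₂ - N₂ * c₁)) := by
  have hN2 : N₂ = (lam₁ / lam₂) • N₁ := by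
    rw [div_eq_mul_inv, mul_comm, mul_smul, hN, ← mul_smul, inv_mul_cancel₀ hlam₂, one_smul]
  have hη2 : η₂ = (lam₁ / lam₂) • η₁ := by
    rw [div_eq_mul_inv, mul_comm, mul_smul, hη, ← mul_smul, inv_mul_cancel₀ hlam₂, one_smul]
  subst hN2 hη2
  clear hN hη
  have e1 : N₁ + (lam₁ / lam₂) • N₁ = ((lam₁ + lam₂) / lam₂) • N₁ := by
    match_scalars; field_simp; ring
  have e2 : η₁ + (lam₁ / lam₂) • η₁ = ((lam₁ + lam₂) / lam₂) • η₁ := by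
    match_scalars; field_simp; ring
  rw [e1, e2]
  simp only [smul_mul_assoc, mul_smul_comm, smul_smul, ← smul_sub]
  match_scalars
  field_simp
  ring
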